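/- Fix w > 0. The function d ↦ P_{w,q}(d) = ∫_0^w (2/√d) φ(t/√d)(1 - t/w) dt is strictly decreasing in d on (0, ∞). Equivalently, writing d = 2(1-ρ), the collision probability is strictly increasing in the correlation ρ ∈ (-1, 1). -/

import Mathlib

open MeasureTheory ProbabilityTheory Real Set

/-- Standard normal density. -/
noncomputable def stdPdf (x : ℝ) : ℝ := (Real.sqrt (2 * Real.pi))⁻¹ * Real.exp (-x ^ 2 / 2)

/-- Standard normal CDF. -/
noncomputable def Phi (x : ℝ) : ℝ := ∫ t in Set.Iic x, stdPdf t

lemma stdPdf_pos (x : ℝ) : 0 < stdPdf x := by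
  unfold stdPdf
  positivity

lemma stdPdf_cont : Continuous stdPdf := by
  unfold stdPdf
  fun_prop

lemma stdPdf_integrable : Integrable stdPdf := by
  have h : Integrable (fun x : ℝ => Real.exp (-(1/2 : ℝ) * x ^ 2)) :=
    integrable_exp_neg_mul_sq (by norm_num)
  have := h.const_mul ((Real.sqrt (2 * Real.pi))⁻¹)
  refine this.congr (Filter.Eventually.of_forall fun x => ?_)
  unfold stdPdf
  ring_nf

/-- auxiliary integrand. -/
noncomputable def gAux (w s x : ℝ) : ℝ := 2 * stdPdf x * max 0 (1 - s * x / w)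

section aux

variable {w : ℝ}

lemma gAux_integrableOn (hw : 0 < w) {s : ℝ} (hs : 0 ≤ s) :
    IntegrableOn (gAux w s) (Ioi (0:ℝ)) := by
  refine Integrable.mono' ((stdPdf_integrable.const_mul 2).integrableOn) ?_ ?_
  · exact ((continuous_const.mul stdPdf_cont).mul
      (continuous_const.max (by fun_prop))).aestronglyMeasurable
  · rw [ae_restrict_iff' measurableSet_Ioi]
    filter_upwards with x hx
    have hx0 : (0:ℝ) < x := hx
    have h1 : 0 < stdPdf x := stdPdf_pos x
    have hmax0 : (0:ℝ) ≤ max 0 (1 - s * x / w) := le_max_left _ _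
    have hmax1 : max 0 (1 - s * x / w) ≤ 1 := by
      have : 0 ≤ s * x / w := by positivity
      refine max_le (by norm_num) (by linarith)
    simp only [gAux]
    rw [Real.norm_eq_abs, abs_of_nonneg (by positivity)]
    nlinarith

lemma key_eq (hw : 0 < w) {s : ℝ} (hs : 0 < s) :
    (∫ t in Set.Ioc (0 : ℝ) w, (2 / s) * stdPdf (t / s) * (1 - t / w))
      = ∫ x in Ioi (0:ℝ), gAux w s x := by
  have hws : 0 < w / s := by positivity
  rw [← intervalIntegral.integral_of_le hw.le]
  have hcomp : (∫ t in (0:ℝ)..w, 2 / s * stdPdf (t / s) * (1 - t / w))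
      = s • ∫ x in (0:ℝ)/s..w/s, 2 / s * stdPdf x * (1 - s * x / w) := by
    rw [← intervalIntegral.integral_comp_div (fun x => 2 / s * stdPdf x * (1 - s * x / w)) hs.ne']
    refine intervalIntegral.integral_congr fun t _ => ?_
    show 2 / s * stdPdf (t / s) * (1 - t / w)
      = 2 / s * stdPdf (t / s) * (1 - s * (t / s) / w)
    rw [show s * (t / s) = t by field_simp]
  rw [hcomp]
  have h2 : (s • ∫ x in (0:ℝ)/s..w/s, (2 / s) * stdPdf x * (1 - s * x / w))
      = ∫ x in (0:ℝ)..w/s, 2 * stdPdf x * (1 - s * x / w) := by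
    rw [zero_div, smul_eq_mul, ← intervalIntegral.integral_const_mul]
    refine intervalIntegral.integral_congr fun x _ => ?_
    field_simp
  rw [h2]
  have h3 : (∫ x in (0:ℝ)..w/s, 2 * stdPdf x * (1 - s * x / w))
      = ∫ x in Ioc (0:ℝ) (w/s), gAux w s x := by
    rw [intervalIntegral.integral_of_le hws.le]
    refine setIntegral_congr_fun measurableSet_Ioc fun x hx => ?_
    have hxle : s * x ≤ w := by
      rw [← le_div_iff₀' hs]; exact hx.2
    have hm : max 0 (1 - s * x / w) = 1 - s * x / w := by
      refine max_eq_right ?_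
      have : s * x / w ≤ 1 := (div_le_one hw).mpr hxle
      linarith
    rw [gAux, hm]
  have h4 : (∫ x in Ioi (w/s), gAux w s x) = 0 := by
    rw [setIntegral_congr_fun measurableSet_Ioi (g := fun _ => (0:ℝ)) fun x hx => ?_]
    · simp
    · have hxgt : w < s * x := by
        rw [← div_lt_iff₀' hs]; exact hx
      have hneg : (1 : ℝ) - s * x / w ≤ 0 := by
        have : 1 < s * x / w := (one_lt_div hw).mpr hxgt
        linarith
      simp [gAux, max_eq_left hneg]
  have h5 : Ioc (0:ℝ) (w/s) ∪ Ioi (w/s) = Ioi (0:ℝ) := Ioc_union_Ioi_eq_Ioi hws.le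
  have hint := gAux_integrableOn hw hs.le
  have h6 : (∫ x in Ioi (0:ℝ), gAux w s x)
      = (∫ x in Ioc (0:ℝ) (w/s), gAux w s x) + ∫ x in Ioi (w/s), gAux w s x := by
    rw [← h5, setIntegral_union (Ioc_disjoint_Ioi le_rfl) measurableSet_Ioi
      (hint.mono_set (by rw [← h5]; exact subset_union_left))
      (hint.mono_set (by rw [← h5]; exact subset_union_right))]
  rw [h3, h6, h4, add_zero]

lemma G_strictAnti (hw : 0 < w) :
    StrictAntiOn (fun s => ∫ x in Ioi (0:ℝ), gAux w s x) (Ioi (0:ℝ)) := by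
  intro s1 hs1 s2 hs2 hlt
  have hs1' : (0:ℝ) < s1 := hs1
  have hs2' : (0:ℝ) < s2 := hs2
  have hlt' : s1 ≤ s2 := hlt.le
  have hi1 := gAux_integrableOn hw hs1'.le
  have hi2 := gAux_integrableOn hw hs2'.le
  have hdiff : IntegrableOn (fun x => gAux w s1 x - gAux w s2 x) (Ioi (0:ℝ)) := hi1.sub hi2
  have hnn : ∀ x ∈ Ioi (0:ℝ), 0 ≤ gAux w s1 x - gAux w s2 x := by
    intro x hx
    have hx0 : (0:ℝ) < x := hx
    have hle : (1:ℝ) - s2 * x / w ≤ 1 - s1 * x / w := by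
      have h : s1 * x / w ≤ s2 * x / w := by gcongr
      linarith
    have := mul_le_mul_of_nonneg_left (max_le_max (le_refl (0:ℝ)) hle)
      (by linarith [stdPdf_pos x] : (0:ℝ) ≤ 2 * stdPdf x)
    simp only [gAux]
    linarith
  have hws2 : 0 < w / s2 := by positivity
  have hpos : 0 < ∫ x in (0:ℝ)..(w/s2), (gAux w s1 x - gAux w s2 x) := by
    refine intervalIntegral.intervalIntegral_pos_of_pos_on ?_ ?_ hws2
    · rw [intervalIntegrable_iff_integrableOn_Ioc_of_le hws2.le]
      exact hdiff.mono_set Ioc_subset_Ioi_self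
    · intro x hx
      have hx1 : (0:ℝ) < x := hx.1
      have hxw : x * s2 < w := (lt_div_iff₀ hs2').mp hx.2
      have h2 : s2 * x / w < 1 := by
        rw [div_lt_one hw]; linarith
      have h1 : s1 * x / w < s2 * x / w := by gcongr
      have hm2 : max 0 (1 - s2 * x / w) = 1 - s2 * x / w := max_eq_right (by linarith)
      have hm1 : max 0 (1 - s1 * x / w) = 1 - s1 * x / w := max_eq_right (by linarith)
      simp only [gAux, hm1, hm2]
      nlinarith [mul_pos (stdPdf_pos x) (sub_pos.mpr h1)]
  have hIoc : 0 < ∫ x in Ioc (0:ℝ) (w/s2), (gAux w s1 x - gAux w s2 x) := by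
    rwa [intervalIntegral.integral_of_le hws2.le] at hpos
  have hle2 : (∫ x in Ioc (0:ℝ) (w/s2), (gAux w s1 x - gAux w s2 x))
      ≤ ∫ x in Ioi (0:ℝ), (gAux w s1 x - gAux w s2 x) := by
    refine setIntegral_mono_set hdiff ?_ (HasSubset.Subset.eventuallyLE Ioc_subset_Ioi_self)
    exact (ae_restrict_iff' measurableSet_Ioi).mpr (Filter.Eventually.of_forall hnn)
  have hfin : 0 < (∫ x in Ioi (0:ℝ), gAux w s1 x) - ∫ x in Ioi (0:ℝ), gAux w s2 x := by
    have := integral_sub hi1 hi2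
    rw [← this]
    linarith
  simp only
  linarith

end aux

/-- For fixed w, the random-offset collision probability is strictly decreasing in the
squared distance d; equivalently strictly increasing in the correlation ρ with d = 2(1-ρ). -/
theorem stmt7 (w : ℝ) (hw : 0 < w) :
    StrictAntiOn
      (fun d : ℝ => ∫ t in Set.Ioc (0 : ℝ) w,
        (2 / Real.sqrt d) * stdPdf (t / Real.sqrt d) * (1 - t / w))
      (Set.Ioi (0 : ℝ)) ∧
    StrictMonoOn
      (fun ρ : ℝ => ∫ t in Set.Ioc (0 : ℝ) w,
        (2 / Real.sqrt (2 * (1 - ρ))) * stdPdf (t / Real.sqrt (2 * (1 - ρ))) * (1 - t / w))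
      (Set.Ioo (-1 : ℝ) 1) := by
  have part1 : StrictAntiOn
      (fun d : ℝ => ∫ t in Set.Ioc (0 : ℝ) w,
        (2 / Real.sqrt d) * stdPdf (t / Real.sqrt d) * (1 - t / w))
      (Set.Ioi (0 : ℝ)) := by
    intro d1 hd1 d2 hd2 hlt
    have h1 : (0:ℝ) < Real.sqrt d1 := Real.sqrt_pos.mpr hd1
    have h2 : (0:ℝ) < Real.sqrt d2 := Real.sqrt_pos.mpr hd2
    simp only
    rw [key_eq hw h1, key_eq hw h2]
    exact G_strictAnti hw h1 h2 (Real.sqrt_lt_sqrt (le_of_lt hd1) hlt)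
  refine ⟨part1, ?_⟩
  intro ρ1 hρ1 ρ2 hρ2 hlt
  have h1 : (0:ℝ) < 2 * (1 - ρ1) := by nlinarith [hρ1.2]
  have h2 : (0:ℝ) < 2 * (1 - ρ2) := by nlinarith [hρ2.2]
  exact part1 h2 h1 (by nlinarith)
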